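/- Let p, q be relatively prime positive integers and A(t), B(t) polynomials with nonnegative integer coefficients and nonzero constant terms satisfying A(t)·ξ_q(t) = B(t)·ξ_p(t). Let λ (from the top terms of A in the decomposition by exponents aq - bp, 0 ≤ a < p) and μ (from the top terms of B in the decomposition by exponents ap - bq, 0 ≤ a < q) be the resulting partitions. Then λ and μ are dual (conjugate) partitions, i.e., μ_i = #{j : λ_j > i} for all i ≥ 0. -/
import Mathlib


open Polynomial

noncomputable def xi (d : ℕ) : Polynomial ℤ := ∑ k ∈ Finset.range d, X ^ k

def coeffZ (P : Polynomial ℤ) (j : ℤ) : ℤ := if 0 ≤ j then P.coeff j.toNat else 0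

lemma coeffZ_neg (P : Polynomial ℤ) {j : ℤ} (hj : j < 0) : coeffZ P j = 0 := by
  simp [coeffZ, not_le.mpr hj]

lemma coeffZ_nonneg {P : Polynomial ℤ} (hP : ∀ n, 0 ≤ P.coeff n) (j : ℤ) : 0 ≤ coeffZ P j := by
  unfold coeffZ; split
  · exact hP _
  · exact le_refl 0

lemma coeffZ_ne_zero_nonneg {P : Polynomial ℤ} {j : ℤ} (h : coeffZ P j ≠ 0) : 0 ≤ j := by
  by_contra hc
  exact h (coeffZ_neg P (by omega))

noncomputable def Hfun (A : Polynomial ℤ) (p : ℕ) (n : ℤ) : ℤ :=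
  ∑ k ∈ Finset.range (n.toNat + 1), coeffZ A (n - (k : ℤ) * p)

lemma Hfun_neg (A : Polynomial ℤ) (p : ℕ) {n : ℤ} (hn : n < 0) : Hfun A p n = 0 := by
  apply Finset.sum_eq_zero
  intro k _
  apply coeffZ_neg
  have : (0:ℤ) ≤ (k : ℤ) * p := by positivity
  linarith

lemma Hfun_stable (A : Polynomial ℤ) {p : ℕ} (hp : 0 < p) {K : ℕ} {n : ℤ}
    (hK : n.toNat < K) :
    (∑ k ∈ Finset.range K, coeffZ A (n - (k : ℤ) * p)) = Hfun A p n := by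
  unfold Hfun
  symm
  apply Finset.sum_subset
  · intro k hk
    simp only [Finset.mem_range] at hk ⊢
    omega
  · intro k hk hk2
    simp only [Finset.mem_range] at hk hk2
    apply coeffZ_neg
    have hkp : (k:ℤ) ≤ (k:ℤ) * p :=
      le_mul_of_one_le_right (by positivity) (by exact_mod_cast hp)
    have hn : n < (k:ℤ) := by omega
    linarith

lemma Hfun_step (A : Polynomial ℤ) {p : ℕ} (hp : 0 < p) (n : ℤ) :
    Hfun A p n - Hfun A p (n - p) = coeffZ A n := by
  by_cases hn : n.toNat = 0
  · have h1 : Hfun A p n = coeffZ A n := by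
      unfold Hfun
      rw [hn]
      simp
    have h2 : Hfun A p (n - p) = 0 := Hfun_neg A p (by omega)
    rw [h1, h2, sub_zero]
  · have h1 : Hfun A p n
        = (∑ k ∈ Finset.range n.toNat, coeffZ A ((n - p) - (k : ℤ) * p)) + coeffZ A n := by
      unfold Hfun
      rw [Finset.sum_range_succ']
      congr 1
      · apply Finset.sum_congr rfl
        intro k _
        congr 1
        push_cast
        ring
      · congr 1
        push_cast
        ring
    have h2 : (∑ k ∈ Finset.range n.toNat, coeffZ A ((n - p) - (k : ℤ) * p)) = Hfun A p (n - p) :=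
      Hfun_stable A hp (by omega)
    rw [h1, h2]
    ring

lemma coeff_shift (P : Polynomial ℤ) (d : ℕ) (m : ℤ) (hm : 0 ≤ m) :
    coeffZ P (m - d) - coeffZ P m = (P * (X ^ d - 1)).coeff m.toNat := by
  rw [mul_sub, mul_one, Polynomial.coeff_sub, Polynomial.coeff_mul_X_pow']
  unfold coeffZ
  rw [if_pos hm]
  by_cases hd : (d : ℤ) ≤ m
  · rw [if_pos (by omega : (0:ℤ) ≤ m - d), if_pos (by omega : d ≤ m.toNat)]
    congr 2
    omega
  · rw [if_neg (by omega : ¬ (0:ℤ) ≤ m - d), if_neg (by omega : ¬ d ≤ m.toNat)]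

lemma key_identity (A B : Polynomial ℤ) {p q : ℕ}
    (h : A * xi q = B * xi p) (m : ℤ) :
    coeffZ A m - coeffZ A (m - q) = coeffZ B m - coeffZ B (m - p) := by
  have hq1 : (xi q) * (X - 1 : Polynomial ℤ) = X ^ q - 1 := by
    simp only [xi]; exact geom_sum_mul X q
  have hp1 : (xi p) * (X - 1 : Polynomial ℤ) = X ^ p - 1 := by
    simp only [xi]; exact geom_sum_mul X p
  have hpoly : A * (X ^ q - 1) = B * (X ^ p - 1) := by
    rw [← hq1, ← hp1, ← mul_assoc, ← mul_assoc, h]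
  by_cases hm : 0 ≤ m
  · have h1 := coeff_shift A q m hm
    have h2 := coeff_shift B p m hm
    rw [hpoly] at h1
    rw [← h2] at h1
    linarith
  · rw [coeffZ_neg A (by omega), coeffZ_neg A (j := m - q) (by omega),
      coeffZ_neg B (by omega), coeffZ_neg B (j := m - p) (by omega)]

lemma Hfun_step_q (A B : Polynomial ℤ) {p q : ℕ} (hp : 0 < p) (hq : 0 < q)
    (hkey : ∀ m : ℤ, coeffZ A m - coeffZ A (m - q) = coeffZ B m - coeffZ B (m - p))
    (n : ℤ) : Hfun A p n - Hfun A p (n - q) = coeffZ B n := by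
  have h2 : (∑ k ∈ Finset.range (n.toNat + 1), coeffZ A ((n - q) - (k : ℤ) * p))
      = Hfun A p (n - q) := Hfun_stable A hp (by omega)
  rw [← h2]
  unfold Hfun
  rw [← Finset.sum_sub_distrib]
  have h3 : ∀ k ∈ Finset.range (n.toNat + 1),
      coeffZ A (n - (k:ℤ) * p) - coeffZ A ((n - q) - (k:ℤ) * p)
      = (fun k : ℕ => coeffZ B (n - (k:ℤ) * p)) k
        - (fun k : ℕ => coeffZ B (n - (k:ℤ) * p)) (k + 1) := by
    intro k _
    have := hkey (n - (k:ℤ) * p)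
    have e1 : n - (k:ℤ) * p - q = (n - q) - (k:ℤ) * p := by ring
    have e2 : n - ((k:ℕ) + 1 : ℕ) * p = n - (k:ℤ) * p - p := by push_cast; ring
    beta_reduce
    rw [e2]
    rw [e1] at this
    linarith
  rw [Finset.sum_congr rfl h3, Finset.sum_range_sub']
  have e3 : n - ((0:ℕ):ℤ) * p = n := by push_cast; ring
  have e4 : coeffZ B (n - ((n.toNat + 1 : ℕ) : ℤ) * p) = 0 := by
    apply coeffZ_neg
    have hkp : ((n.toNat + 1 : ℕ) : ℤ) ≤ ((n.toNat + 1 : ℕ) : ℤ) * p :=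
      le_mul_of_one_le_right (by positivity) (by exact_mod_cast hp)
    have : n < ((n.toNat + 1 : ℕ) : ℤ) := by omega
    linarith
  rw [e3, e4, sub_zero]

section Master

variable {f c : ℤ → ℤ} {d : ℕ}

lemma sum_steps (hstep : ∀ n, f n - f (n - d) = c n) (K : ℕ) (n : ℤ) :
    f n - f (n - (K : ℤ) * d) = ∑ k ∈ Finset.range K, c (n - (k : ℤ) * d) := by
  induction K with
  | zero => simp
  | succ K ih =>
      rw [Finset.sum_range_succ, ← ih]
      have h2 := hstep (n - (K : ℤ) * d)
      have h3 : n - ((K : ℕ) + 1 : ℕ) * d = (n - (K : ℤ) * d) - d := by push_cast; ring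
      rw [h3]
      linarith

lemma rep_f (hstep : ∀ n, f n - f (n - d) = c n) (hneg : ∀ n < 0, f n = 0) (hd : 0 < d)
    (n : ℤ) : f n = ∑ k ∈ Finset.range (n.toNat + 1), c (n - (k : ℤ) * d) := by
  have hsum := sum_steps hstep (n.toNat + 1) n
  have h2 : f (n - ((n.toNat + 1 : ℕ) : ℤ) * d) = 0 := by
    apply hneg
    have h1 : ((n.toNat + 1 : ℕ) : ℤ) ≤ ((n.toNat + 1 : ℕ) : ℤ) * d :=
      le_mul_of_one_le_right (by positivity) (by exact_mod_cast hd)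
    have h3 : n < ((n.toNat + 1 : ℕ) : ℤ) := by omega
    linarith
  rw [h2, sub_zero] at hsum
  exact hsum

lemma c_neg (hstep : ∀ n, f n - f (n - d) = c n) (hneg : ∀ n < 0, f n = 0)
    {m : ℤ} (hm : m < 0) : c m = 0 := by
  have h1 : m - d < 0 := by omega
  rw [← hstep m, hneg m hm, hneg _ h1, sub_zero]

lemma f_nonneg (hstep : ∀ n, f n - f (n - d) = c n) (hneg : ∀ n < 0, f n = 0) (hd : 0 < d)
    (hc0 : ∀ n, 0 ≤ c n) (n : ℤ) : 0 ≤ f n := by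
  rw [rep_f hstep hneg hd n]
  exact Finset.sum_nonneg fun k _ => hc0 _

lemma term_le (hstep : ∀ n, f n - f (n - d) = c n) (hneg : ∀ n < 0, f n = 0) (hd : 0 < d)
    (hc0 : ∀ n, 0 ≤ c n) (n : ℤ) (k : ℕ) : c (n - (k : ℤ) * d) ≤ f n := by
  by_cases hz : c (n - (k : ℤ) * d) = 0
  · rw [hz]; exact f_nonneg hstep hneg hd hc0 n
  · have hnn : 0 ≤ n - (k : ℤ) * d := by
      by_contra hcon
      exact hz (c_neg hstep hneg (not_le.mp hcon))
    have hkd : (k : ℤ) ≤ (k : ℤ) * d :=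
      le_mul_of_one_le_right (by positivity) (by exact_mod_cast hd)
    have hk : k ∈ Finset.range (n.toNat + 1) := by
      rw [Finset.mem_range]
      have : (k : ℤ) ≤ n := by linarith
      omega
    rw [rep_f hstep hneg hd n]
    exact Finset.single_le_sum (fun i _ => hc0 _) hk

lemma exists_term (hstep : ∀ n, f n - f (n - d) = c n) (hneg : ∀ n < 0, f n = 0) (hd : 0 < d)
    {n : ℤ} (hf : 0 < f n) : ∃ k : ℕ, c (n - (k : ℤ) * d) ≠ 0 := by
  rw [rep_f hstep hneg hd n] at hf
  obtain ⟨k, _, hk⟩ := Finset.exists_ne_zero_of_sum_ne_zero (ne_of_gt hf)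
  exact ⟨k, hk⟩

lemma line_iff (hstep : ∀ n, f n - f (n - d) = c n) (hneg : ∀ n < 0, f n = 0)
    (hd : 0 < d) (hc0 : ∀ n, 0 ≤ c n)
    (x l : ℤ) (hmax : c (x - l * d) ≠ 0) (hub : ∀ b : ℤ, c (x - b * d) ≠ 0 → b ≤ l)
    (b : ℤ) : 0 < f (x - b * d) ↔ b ≤ l := by
  constructor
  · intro hf
    obtain ⟨k, hk⟩ := exists_term hstep hneg hd hf
    have h2 : c (x - (b + (k : ℤ)) * d) ≠ 0 := by
      rw [show x - (b + (k : ℤ)) * d = x - b * d - (k : ℤ) * d from by ring]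
      exact hk
    have h3 := hub _ h2
    have h4 : (0 : ℤ) ≤ (k : ℤ) := Int.natCast_nonneg k
    linarith
  · intro hb
    have hpos : 0 < c (x - l * d) := lt_of_le_of_ne (hc0 _) (Ne.symm hmax)
    have hk : x - b * d - (((l - b).toNat : ℕ) : ℤ) * d = x - l * d := by
      rw [Int.toNat_of_nonneg (by linarith : (0:ℤ) ≤ l - b)]
      ring
    have ht := term_le hstep hneg hd hc0 (x - b * d) (l - b).toNat
    rw [hk] at ht
    linarith

end Master

/-- With λ coming from the top terms of A (exponents aq - bp, 0 ≤ a < p) and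
    μ from the top terms of B (exponents ap - bq, 0 ≤ a < q), the
    partitions λ and μ are dual (conjugate): μ_i = #{j : λ_j > i}. -/
theorem stmt8 (p q : ℕ) (hp : 0 < p) (hq : 0 < q) (hpq : Nat.Coprime p q)
    (A B : Polynomial ℤ)
    (hA : ∀ n, 0 ≤ A.coeff n) (hB : ∀ n, 0 ≤ B.coeff n)
    (hA0 : A.coeff 0 ≠ 0) (hB0 : B.coeff 0 ≠ 0)
    (h : A * xi q = B * xi p)
    (lam mu : ℕ → ℤ)
    (hlam : ∀ a < p,
      coeffZ A ((a : ℤ) * q - lam (p - 1 - a) * p) ≠ 0 ∧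
      ∀ b : ℤ, coeffZ A ((a : ℤ) * q - b * p) ≠ 0 → b ≤ lam (p - 1 - a))
    (hmu : ∀ a < q,
      coeffZ B ((a : ℤ) * p - mu (q - 1 - a) * q) ≠ 0 ∧
      ∀ b : ℤ, coeffZ B ((a : ℤ) * p - b * q) ≠ 0 → b ≤ mu (q - 1 - a)) :
    (∀ i : ℕ, i < q →
        mu i = (((Finset.range p).filter fun j => (i : ℤ) < lam j).card : ℤ)) ∧
      (∀ i : ℕ, q ≤ i →
        ((Finset.range p).filter fun j => (i : ℤ) < lam j).card = 0) := by
  have hApos : ∀ m : ℤ, 0 ≤ coeffZ A m := coeffZ_nonneg hA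
  have hBpos : ∀ m : ℤ, 0 ≤ coeffZ B m := coeffZ_nonneg hB
  have hstep_p : ∀ n : ℤ, Hfun A p n - Hfun A p (n - p) = coeffZ A n := Hfun_step A hp
  have hstep_q : ∀ n : ℤ, Hfun A p n - Hfun A p (n - q) = coeffZ B n :=
    Hfun_step_q A B hp hq (key_identity A B h)
  have hneg : ∀ n : ℤ, n < 0 → Hfun A p n = 0 := fun n hn => Hfun_neg A p hn
  have P1 : ∀ a : ℕ, a < p → ∀ b : ℤ,
      (0 < Hfun A p ((a : ℤ) * q - b * p) ↔ b ≤ lam (p - 1 - a)) := by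
    intro a ha b
    exact line_iff hstep_p hneg hp hApos ((a : ℤ) * q) (lam (p - 1 - a))
      (hlam a ha).1 (hlam a ha).2 b
  have P2 : ∀ a : ℕ, a < q → ∀ b : ℤ,
      (0 < Hfun A p ((a : ℤ) * p - b * q) ↔ b ≤ mu (q - 1 - a)) := by
    intro a ha b
    exact line_iff hstep_q hneg hq hBpos ((a : ℤ) * p) (mu (q - 1 - a))
      (hmu a ha).1 (hmu a ha).2 b
  constructor
  · -- part one
    intro i hi
    set a' : ℕ := q - 1 - i with ha'def
    have ha' : a' < q := by omega
    have hia : q - 1 - a' = i := by omega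
    have P2' : ∀ b : ℤ, 0 < Hfun A p ((a' : ℤ) * p - b * q) ↔ b ≤ mu i := by
      intro b
      rw [← hia]
      exact P2 a' ha' b
    have hmu0 : 0 ≤ mu i := by
      apply (P2' 0).mp
      rw [show ((a' : ℤ) * p - 0 * q) = (a' : ℤ) * p from by ring]
      have ht := term_le hstep_p hneg hp hApos ((a' : ℤ) * p) a'
      rw [show ((a' : ℤ) * p - (a' : ℤ) * p) = 0 from by ring] at ht
      have hc0 : 0 < coeffZ A 0 := by
        have : coeffZ A 0 = A.coeff 0 := by simp [coeffZ]
        rw [this]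
        exact lt_of_le_of_ne (hA 0) (Ne.symm hA0)
      linarith
    have hmup : mu i < p := by
      have h1 := (hmu a' ha').1
      rw [hia] at h1
      have h2 : 0 ≤ (a' : ℤ) * p - mu i * q := coeffZ_ne_zero_nonneg h1
      have h3 : (a' : ℤ) ≤ (q : ℤ) - 1 := by omega
      have h4 : (1 : ℤ) ≤ p := by exact_mod_cast hp
      have h5 : (1 : ℤ) ≤ q := by exact_mod_cast hq
      nlinarith
    have hcond : ∀ j : ℕ, j < p → ((i : ℤ) < lam j ↔ (j : ℤ) < mu i) := by
      intro j hj
      set a : ℕ := p - 1 - j with hadef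
      have ha : a < p := by omega
      have hja : p - 1 - a = j := by omega
      have e2 := P1 a ha ((i : ℤ) + 1)
      rw [hja] at e2
      have e3 : (a : ℤ) * q - ((i : ℤ) + 1) * p = (a' : ℤ) * p - ((j : ℤ) + 1) * q := by
        have c1 : (a : ℤ) = (p : ℤ) - 1 - j := by omega
        have c2 : (a' : ℤ) = (q : ℤ) - 1 - i := by omega
        rw [c1, c2]
        ring
      rw [e3] at e2
      have e4 := P2' ((j : ℤ) + 1)
      constructor
      · intro hlt
        have := e4.mp (e2.mpr (by omega))
        omega
      · intro hlt
        have := e2.mp (e4.mpr (by omega))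
        omega
    have hfilter : (Finset.range p).filter (fun j => (i : ℤ) < lam j)
        = Finset.range (mu i).toNat := by
      ext j
      simp only [Finset.mem_filter, Finset.mem_range]
      constructor
      · rintro ⟨hj, hl⟩
        have := (hcond j hj).mp hl
        omega
      · intro hj
        have hjp : j < p := by omega
        exact ⟨hjp, (hcond j hjp).mpr (by omega)⟩
    rw [hfilter, Finset.card_range]
    omega
  · -- part two
    intro i hi
    rw [Finset.card_eq_zero, Finset.filter_eq_empty_iff]
    intro j hj
    simp only [Finset.mem_range] at hj
    intro hlt
    set a : ℕ := p - 1 - j with hadef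
    have ha : a < p := by omega
    have hja : p - 1 - a = j := by omega
    have h1 := (hlam a ha).1
    rw [hja] at h1
    have h2 : 0 ≤ (a : ℤ) * q - lam j * p := coeffZ_ne_zero_nonneg h1
    have h3 : (a : ℤ) ≤ (p : ℤ) - 1 := by omega
    have h4 : (1 : ℤ) ≤ p := by exact_mod_cast hp
    have h5 : (1 : ℤ) ≤ q := by exact_mod_cast hq
    have h6 : (q : ℤ) ≤ i := by exact_mod_cast hi
    nlinarith
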